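/- If 𝔱 = 𝔠, then there is a minimal right ideal of (βℕ, +) that is also a P-set in ℕ*. -/

import Mathlib

open Filter Set Topology

noncomputable section

/-- `βℕ`: the space of ultrafilters on `ℕ` (the Stone–Čech compactification of `ℕ`). -/
abbrev βN := Ultrafilter ℕ

/-- `ℕ* = βℕ ∖ ℕ`: the free (nonprincipal) ultrafilters, i.e. those containing
every cofinite set. -/
def NStar : Set βN := {p | (p : Filter ℕ) ≤ Filter.cofinite}

/-- The shift map `σ : βℕ → βℕ`, the pushforward under `n ↦ n + 1`. -/
def shift (p : βN) : βN := p.map (· + 1)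

/-- Addition on `βℕ`: `A ∈ p + q ↔ {n | A − n ∈ p} ∈ q`, where `A − n = {m | m + n ∈ A}`. -/
def addU (p q : βN) : βN := q.bind fun n => p.map (· + n)

/-- A right ideal of `(βℕ, +)`: `I + βℕ ⊆ I`. -/
def IsRightIdeal (I : Set βN) : Prop := ∀ p ∈ I, ∀ q : βN, addU p q ∈ I

/-- A minimal right ideal: a nonempty right ideal not properly containing any
other (nonempty) right ideal. -/
def IsMinRightIdeal (I : Set βN) : Prop :=
  I.Nonempty ∧ IsRightIdeal I ∧
    ∀ J : Set βN, J.Nonempty → IsRightIdeal J → J ⊆ I → J = I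

/-- `A* = {p ∈ ℕ* | A ∈ p}`, as a subset of the subspace `ℕ*`. -/
def starSet (A : Set ℕ) : Set ↥NStar := {p | A ∈ (p : βN)}

/-- `F* = ⋂_{A ∈ F} A*` for a (free) filter `F` on `ℕ`. -/
def filterStar (F : Filter ℕ) : Set βN := ⋂ A ∈ F, {p : βN | A ∈ p}

/-- A closed `P`-set of the space `ℕ*`: for every countable collection of open
sets containing `X`, `X` is contained in the interior of the intersection. -/
def IsPSetSub (X : Set ↥NStar) : Prop :=
  IsClosed X ∧ ∀ 𝒜 : Set (Set ↥NStar), 𝒜.Countable →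
    (∀ U ∈ 𝒜, IsOpen U ∧ X ⊆ U) → X ⊆ interior (⋂₀ 𝒜)

/-- A subset of `βℕ` which lies in `ℕ*` and is a closed `P`-set of `ℕ*`. -/
def IsPSetIn (X : Set βN) : Prop :=
  X ⊆ NStar ∧ IsPSetSub (Subtype.val ⁻¹' X)

/-- `A ⊆ ℕ` is thick if it contains arbitrarily long intervals. -/
def Thick (A : Set ℕ) : Prop := ∀ k : ℕ, ∃ n : ℕ, Set.Icc n (n + k) ⊆ A

/-- `A ⊆* B`: `A ∖ B` is finite. -/
def almostSub (A B : Set ℕ) : Prop := (A \ B).Finite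

/-- The tower number `𝔱`: the least cardinality of a `⊆*`-chain of infinite subsets
of `ℕ` with no infinite pseudo-intersection. -/
def towerNum : Cardinal :=
  sInf {c : Cardinal | ∃ C : Set (Set ℕ), c = Cardinal.mk ↥C ∧ (∀ A ∈ C, A.Infinite) ∧
    IsChain almostSub C ∧ ¬∃ B : Set ℕ, B.Infinite ∧ ∀ A ∈ C, almostSub B A}

/-- `𝔱_Θ`: the least cardinality of a `⊆*`-chain of thick subsets of `ℕ` with no
thick `⊆*`-lower bound. -/
def towerNumTheta : Cardinal :=
  sInf {c : Cardinal | ∃ C : Set (Set ℕ), c = Cardinal.mk ↥C ∧ (∀ A ∈ C, Thick A) ∧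
    IsChain almostSub C ∧ ¬∃ B : Set ℕ, Thick B ∧ ∀ A ∈ C, almostSub B A}

/-- The pseudo-intersection number `𝔭`: the least cardinality of a filter base of
infinite subsets of `ℕ` (all finite intersections infinite) with no infinite
pseudo-intersection. -/
def pNum : Cardinal :=
  sInf {c : Cardinal | ∃ C : Set (Set ℕ), c = Cardinal.mk ↥C ∧
    (∀ S : Finset (Set ℕ), ↑S ⊆ C → (⋂ A ∈ S, A : Set ℕ).Infinite) ∧
    ¬∃ B : Set ℕ, B.Infinite ∧ ∀ A ∈ C, almostSub B A}

/-- Chain transitivity for a dynamical system on a topological space, via open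
covers: for every open cover `𝒰` and all `x, y` there is a `𝒰`-chain from `x` to `y`. -/
def ChainTransitive {X : Type*} [TopologicalSpace X] (f : X → X) : Prop :=
  ∀ 𝒰 : Set (Set X), (∀ U ∈ 𝒰, IsOpen U) → ⋃₀ 𝒰 = Set.univ →
    ∀ x y : X, ∃ (n : ℕ) (c : ℕ → X), c 0 = x ∧ c n = y ∧
      ∀ i < n, ∃ U ∈ 𝒰, f (c i) ∈ U ∧ c (i + 1) ∈ U

lemma shift_mem_NStar {p : βN} (hp : p ∈ NStar) : shift p ∈ NStar := by
  have h1 : Filter.Tendsto (· + 1) Filter.cofinite Filter.cofinite :=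
    Function.Injective.tendsto_cofinite (add_left_injective 1)
  simp only [NStar, Set.mem_setOf_eq, shift, Ultrafilter.coe_map] at *
  exact (Filter.map_mono hp).trans h1

/-- The shift map restricted to `ℕ*`. -/
def shiftStar (p : ↥NStar) : ↥NStar := ⟨shift p.1, shift_mem_NStar p.2⟩

namespace Stmt5

/-- `A − n`. -/
def tr (n : ℕ) (A : Set ℕ) : Set ℕ := {m | m + n ∈ A}

lemma mem_tr {n m : ℕ} {A : Set ℕ} : m ∈ tr n A ↔ m + n ∈ A := Iff.rfl

lemma tr_zero (A : Set ℕ) : tr 0 A = A := by ext m; simp [tr]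

lemma tr_inter (n : ℕ) (A B : Set ℕ) : tr n (A ∩ B) = tr n A ∩ tr n B := rfl

lemma diff_tr_finite {A B : Set ℕ} (n : ℕ) (h : (A \ B).Finite) :
    (tr n A \ tr n B).Finite := by
  have hsub : tr n A \ tr n B ⊆ (· + n) ⁻¹' (A \ B) := fun m hm => ⟨hm.1, hm.2⟩
  exact ((h.preimage (add_left_injective n).injOn)).subset hsub

lemma almostSub_refl (A : Set ℕ) : almostSub A A := by simp [almostSub]

lemma almostSub_of_subset {A B : Set ℕ} (h : A ⊆ B) : almostSub A B := by
  have : A \ B = ∅ := by rwa [diff_eq_empty]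
  simp [almostSub, this]

lemma almostSub_trans {A B C : Set ℕ} (h1 : almostSub A B) (h2 : almostSub B C) :
    almostSub A C := by
  have : A \ C ⊆ (A \ B) ∪ (B \ C) := by
    intro x hx
    by_cases hb : x ∈ B
    · exact Or.inr ⟨hb, hx.2⟩
    · exact Or.inl ⟨hx.1, hb⟩
  exact (h1.union h2).subset this

lemma almostSub_tr_mono {A B : Set ℕ} (h : almostSub A B) (n : ℕ) :
    almostSub (tr n A) (tr n B) := diff_tr_finite n h

lemma thick_infinite {T : Set ℕ} (hT : Thick T) : T.Infinite := by
  apply Set.infinite_of_forall_exists_gt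
  intro a
  obtain ⟨n, hn⟩ := hT (a + 1)
  exact ⟨n + (a + 1), hn ⟨Nat.le_add_right _ _, le_rfl⟩, by omega⟩

lemma thick_exists_interval {T : Set ℕ} (hT : Thick T) (k N : ℕ) :
    ∃ n, N ≤ n ∧ Set.Icc n (n + k) ⊆ T := by
  obtain ⟨a, ha⟩ := hT (N + k)
  refine ⟨a + N, Nat.le_add_left _ _, fun x hx => ?_⟩
  obtain ⟨h1, h2⟩ := hx
  exact ha ⟨by omega, by omega⟩

lemma thick_univ : Thick (Set.univ : Set ℕ) := fun k => ⟨0, fun x _ => trivial⟩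

/-- The Θ-operation: inside a thick set, a thick set almost contained in all translates. -/
lemma thick_theta {T : Set ℕ} (hT : Thick T) :
    ∃ T', Thick T' ∧ T' ⊆ T ∧ ∀ n, almostSub T' (tr n T) := by
  have h := fun k => (thick_exists_interval hT (2 * k) 0)
  choose a ha0 ha using h
  refine ⟨⋃ k, Set.Icc (a k) (a k + k), ?_, ?_, ?_⟩
  · intro k
    exact ⟨a k, Set.subset_iUnion_of_subset k fun x hx => hx⟩
  · intro x hx
    obtain ⟨k, hk⟩ := Set.mem_iUnion.1 hx
    obtain ⟨hk1, hk2⟩ := hk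
    exact ha k ⟨hk1, by omega⟩
  · intro n
    have hsub : (⋃ k, Set.Icc (a k) (a k + k)) \ tr n T ⊆
        ⋃ k ∈ Finset.range n, Set.Icc (a k) (a k + k) := by
      intro x hx
      obtain ⟨hx1, hx2⟩ := hx
      obtain ⟨k, hk⟩ := Set.mem_iUnion.1 hx1
      rcases lt_or_ge k n with hkn | hkn
      · exact Set.mem_biUnion (Finset.mem_range.2 hkn) hk
      · exfalso
        apply hx2
        obtain ⟨hk1, hk2⟩ := hk
        show x + n ∈ T
        exact ha k ⟨by omega, by omega⟩
    exact (Set.Finite.biUnion (Finset.range n).finite_toSet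
      (fun k _ => Set.finite_Icc _ _)).subset hsub

lemma thick_dichotomy {T : Set ℕ} (hT : Thick T) (A : Set ℕ) :
    ∃ T', Thick T' ∧ T' ⊆ T ∧
      (T' ∩ A = ∅ ∨ ∃ k, T' ⊆ ⋃ n ∈ Set.Iic k, tr n A) := by
  by_cases h : Thick (T \ A)
  · refine ⟨T \ A, h, Set.diff_subset, Or.inl ?_⟩
    ext x; simp only [Set.mem_inter_iff, Set.mem_diff, Set.mem_empty_iff_false, iff_false]
    rintro ⟨⟨_, hna⟩, ha⟩; exact hna ha
  · simp only [Thick, not_forall] at h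
    obtain ⟨k, hk⟩ := h
    push_neg at hk
    have h2 := fun m => thick_exists_interval hT (m + k) 0
    choose b hb0 hb using h2
    refine ⟨⋃ m, Set.Icc (b m) (b m + m), ?_, ?_, Or.inr ⟨k, ?_⟩⟩
    · intro m
      exact ⟨b m, Set.subset_iUnion_of_subset m fun x hx => hx⟩
    · intro x hx
      obtain ⟨m, hm⟩ := Set.mem_iUnion.1 hx
      obtain ⟨hm1, hm2⟩ := hm
      exact hb m ⟨hm1, by omega⟩
    · intro x hx
      obtain ⟨m, hm⟩ := Set.mem_iUnion.1 hx
      obtain ⟨hm1, hm2⟩ := hm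
      have hIcc : Set.Icc x (x + k) ⊆ T := by
        intro y hy
        obtain ⟨hy1, hy2⟩ := hy
        exact hb m ⟨by omega, by omega⟩
      obtain ⟨y, hy, hyn⟩ := Set.not_subset.1 (hk x)
      obtain ⟨hya, hyb⟩ := hy
      have hyT : y ∈ T := hIcc ⟨hya, hyb⟩
      have hyA : y ∈ A := by
        by_contra hyA
        exact hyn ⟨hyT, hyA⟩
      refine Set.mem_biUnion (show y - x ∈ Set.Iic k by simp; omega) ?_
      show x + (y - x) ∈ A
      have : x + (y - x) = y := by omega
      rwa [this]



lemma tower_prop (h : towerNum = Cardinal.continuum) {C : Set (Set ℕ)}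
    (hcard : Cardinal.mk ↥C < Cardinal.continuum) (hinf : ∀ A ∈ C, A.Infinite)
    (hch : IsChain almostSub C) :
    ∃ B : Set ℕ, B.Infinite ∧ ∀ A ∈ C, almostSub B A := by
  by_contra hB
  have hmem : towerNum ≤ Cardinal.mk ↥C := csInf_le' ⟨C, rfl, hinf, hch, hB⟩
  rw [h] at hmem
  exact absurd hcard hmem.not_gt

/-- Generic transfinite recursion with choice along a well-order. -/
lemma rec_choice {ι : Type} {α : Type} [Nonempty α] (r : ι → ι → Prop) [wo : IsWellOrder ι r]
    (Q : ι → α → (ι → α) → Prop)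
    (hmono : ∀ i S f f', (∀ j, r j i → f j = f' j) → Q i S f → Q i S f')
    (hex : ∀ i (f : ι → α), (∀ j, r j i → Q j (f j) f) → ∃ S, Q i S f) :
    ∃ f : ι → α, ∀ i, Q i (f i) f := by
  classical
  have wf : WellFounded r := wo.wf
  set d : α := Classical.arbitrary α with hd
  set F : ∀ i, (∀ j, r j i → α) → α := fun i rec =>
    if h : ∃ S, Q i S (fun j => if hj : r j i then rec j hj else d) then h.choose else d
    with hF
  set f : ι → α := wf.fix F with hf
  have key : ∀ i, f i = F i (fun j _ => f j) := fun i => wf.fix_eq F i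
  refine ⟨f, ?_⟩
  intro i
  induction i using wf.induction with
  | _ i IH =>
    have hprev : ∀ j, r j i → Q j ((fun j' => if hj : r j' i then f j' else d) j)
        (fun j' => if hj : r j' i then f j' else d) := by
      intro j hj
      have h1 : Q j (f j) f := IH j hj
      have h2 : (fun j' => if hj : r j' i then f j' else d) j = f j := dif_pos hj
      rw [h2]
      refine hmono j (f j) f _ ?_ h1
      intro j' hj'
      have : r j' i := trans_of r hj' hj
      simp [dif_pos this]
    have hEx : ∃ S, Q i S (fun j => if hj : r j i then f j else d) := hex i _ hprev
    have hfi : f i = hEx.choose := by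
      rw [key i]
      simp only [hF]
      rw [dif_pos hEx]
    have hQ : Q i (f i) (fun j => if hj : r j i then f j else d) := by
      rw [hfi]; exact hEx.choose_spec
    refine hmono i (f i) _ f ?_ hQ
    intro j hj
    simp [dif_pos hj]

lemma nth_le_of_card {p : ℕ → Prop} (hC : (setOf p).Infinite) {x m : ℕ} {t : Finset ℕ}
    (ht : ∀ y ∈ t, p y ∧ y ≤ x) (hcard : m < t.card) : Nat.nth p m ≤ x := by
  classical
  by_contra hx
  push_neg at hx
  have hcnt : ∀ y ∈ t, Nat.count p y < m := by
    intro y hy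
    by_contra hge
    push_neg at hge
    have h1 : Nat.nth p m ≤ Nat.nth p (Nat.count p y) := (Nat.nth_le_nth hC).2 hge
    rw [Nat.nth_count (ht y hy).1] at h1
    exact absurd (h1.trans (ht y hy).2) hx.not_ge
  have hinj : Set.InjOn (Nat.count p) t := by
    intro a ha b hb hab
    rw [← Nat.nth_count (ht a ha).1, ← Nat.nth_count (ht b hb).1, hab]
  have hle : t.card ≤ m := by
    have := Finset.card_le_card_of_injOn (Nat.count p)
      (fun y hy => Finset.mem_range.2 (hcnt y hy)) hinj
    simpa using this
  omega

lemma nth_shift {S C : Set ℕ} (hS : S.Infinite) (hC : C.Infinite) (h : almostSub S C) :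
    ∃ k, ∀ m, Nat.nth (· ∈ C) m ≤ Nat.nth (· ∈ S) (m + k) := by
  classical
  have hS' : (setOf (· ∈ S)).Infinite := by exact hS
  have hC' : (setOf (· ∈ C)).Infinite := by exact hC
  refine ⟨h.toFinset.card, fun m => ?_⟩
  set k := h.toFinset.card with hk
  set u : ℕ → ℕ := fun j => Nat.nth (· ∈ S) j with hu
  set t₀ : Finset ℕ := (Finset.range (m + k + 1)).image u with ht₀
  set tb : Finset ℕ := t₀.filter (· ∈ C) with htb
  have hmem : ∀ y ∈ tb, y ∈ C ∧ y ≤ u (m + k) := by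
    intro y hy
    rw [htb, Finset.mem_filter] at hy
    obtain ⟨hy0, hyC⟩ := hy
    rw [ht₀, Finset.mem_image] at hy0
    obtain ⟨j, hj, rfl⟩ := hy0
    have hj' := Finset.mem_range.1 hj
    refine ⟨hyC, ?_⟩
    exact (Nat.nth_le_nth hS').2 (by omega : j ≤ m + k)
  have hcard0 : t₀.card = m + k + 1 := by
    rw [ht₀, Finset.card_image_of_injective _ (Nat.nth_injective hS')]
    simp
  have hsub : t₀.filter (fun y => ¬ y ∈ C) ⊆ h.toFinset := by
    intro y hy
    rw [Finset.mem_filter] at hy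
    obtain ⟨hy0, hyC⟩ := hy
    rw [ht₀, Finset.mem_image] at hy0
    obtain ⟨j, _, rfl⟩ := hy0
    refine (Set.Finite.mem_toFinset (s := S \ C) h).2 ?_
    exact ⟨Nat.nth_mem_of_infinite hS' j, hyC⟩
  have hcardb : m < tb.card := by
    have h1 : (t₀.filter (fun y => ¬ y ∈ C)).card ≤ k := by
      rw [hk]; exact Finset.card_le_card hsub
    have h2 : tb.card + (t₀.filter (fun y => ¬ y ∈ C)).card = t₀.card := by
      rw [htb]; exact Finset.card_filter_add_card_filter_not _
    omega
  exact nth_le_of_card hC' hmem hcardb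


lemma nth_range_eq {u : ℕ → ℕ} (hu : StrictMono u) :
    ∀ m, Nat.nth (· ∈ Set.range u) m = u m := by
  have hinf : (setOf (· ∈ Set.range u)).Infinite := by
    exact Set.infinite_range_of_injective hu.injective
  have h1 : StrictMono (Nat.nth (· ∈ Set.range u)) := Nat.nth_strictMono hinf
  have h2 : Set.range (Nat.nth (· ∈ Set.range u)) = Set.range u := by
    rw [Nat.range_nth_of_infinite hinf]; rfl
  have h3 := (StrictMono.range_inj h1 hu).1 h2
  intro m; rw [h3]

lemma two_mul_le_two_pow : ∀ j : ℕ, 2 ≤ j → 2 * j ≤ 2 ^ j := by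
  intro j
  induction j with
  | zero => omega
  | succ n IH =>
    intro h
    rcases Nat.lt_or_ge n 2 with h2 | h2
    · interval_cases n
      · omega
      · norm_num
    · have h3 := IH h2
      have h4 : (2:ℕ) ≤ 2 ^ n := by
        calc (2:ℕ) ≤ 2 * n := by omega
        _ ≤ 2 ^ n := h3
      rw [pow_succ]
      omega

lemma exists_dominating (h𝔱 : towerNum = Cardinal.continuum) {ι : Type}
    (hι : Cardinal.mk ι < Cardinal.continuum) (g : ι → ℕ → ℕ) :
    ∃ f : ℕ → ℕ, ∀ i, ∀ᶠ m in Filter.atTop, g i m < f m := by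
  classical
  obtain ⟨r, wo, hr⟩ := Cardinal.ord_eq ι
  haveI := wo
  set G : ι → ℕ → ℕ := fun i m => (Finset.range (m + 1)).sup (g i) with hG
  have hGge : ∀ i m, g i m ≤ G i m := fun i m =>
    Finset.le_sup (Finset.mem_range.2 (Nat.lt_succ_self m))
  have hGmono : ∀ i, Monotone (G i) := by
    intro i a b hab
    exact Finset.sup_mono (by intro x hx; rw [Finset.mem_range] at *; omega)
  set Q : ι → Set ℕ → (ι → Set ℕ) → Prop := fun i S f =>
    S.Infinite ∧ (∀ j, r j i → almostSub S (f j)) ∧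
      ∀ m, G i (2 ^ m) < Nat.nth (· ∈ S) m with hQ
  have hmono : ∀ i S f f', (∀ j, r j i → f j = f' j) → Q i S f → Q i S f' := by
    rintro i S f f' hff ⟨h1, h2, h3⟩
    exact ⟨h1, fun j hj => (hff j hj) ▸ h2 j hj, h3⟩
  have hex : ∀ i (f : ι → Set ℕ), (∀ j, r j i → Q j (f j) f) → ∃ S, Q i S f := by
    intro i f hf
    set C : Set (Set ℕ) := f '' {j | r j i} with hC
    have hcard : Cardinal.mk ↥C < Cardinal.continuum := by
      refine lt_of_le_of_lt Cardinal.mk_image_le ?_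
      have h1 : Cardinal.mk ↥{j | r j i} = (Ordinal.typein r i).card :=
        Ordinal.card_typein i
      rw [h1]
      exact lt_trans (Cardinal.card_typein_lt i hr) hι
    have hinf : ∀ A ∈ C, A.Infinite := by
      rintro A ⟨j, hj, rfl⟩; exact (hf j hj).1
    have hch : IsChain almostSub C := by
      rintro A ⟨j, hj, rfl⟩ B ⟨j', hj', rfl⟩ hne
      rcases trichotomous_of r j j' with h | h | h
      · exact Or.inr ((hf j' hj').2.1 j h)
      · exact absurd (by rw [h]) hne
      · exact Or.inl ((hf j hj).2.1 j' h)
    obtain ⟨S₀, hS₀inf, hS₀sub⟩ := tower_prop h𝔱 hcard hinf hch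
    set nxt : ℕ → ℕ := fun x => Classical.choose (hS₀inf.exists_gt x) with hnxt
    have hnxtP : ∀ x, nxt x ∈ S₀ ∧ x < nxt x := fun x =>
      Classical.choose_spec (hS₀inf.exists_gt x)
    set u : ℕ → ℕ := fun m => Nat.rec (nxt (G i 1))
      (fun m prev => nxt (max prev (G i (2 ^ (m + 1))))) m with hu
    have husucc : ∀ m, u (m + 1) = nxt (max (u m) (G i (2 ^ (m + 1)))) := fun m => rfl
    have huS : ∀ m, u m ∈ S₀ := by
      intro m
      cases m with
      | zero => exact (hnxtP _).1
      | succ m => rw [husucc]; exact (hnxtP _).1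
    have humono : StrictMono u := by
      apply strictMono_nat_of_lt_succ
      intro m
      have h5 := (hnxtP (max (u m) (G i (2 ^ (m + 1))))).2
      rw [husucc]
      exact lt_of_le_of_lt (le_max_left _ _) h5
    have huG : ∀ m, G i (2 ^ m) < u m := by
      intro m
      cases m with
      | zero =>
        have h5 := (hnxtP (G i 1)).2
        show G i (2 ^ 0) < nxt (G i 1)
        simpa [pow_zero] using h5
      | succ m =>
        have h5 := (hnxtP (max (u m) (G i (2 ^ (m + 1))))).2
        rw [husucc]
        exact lt_of_le_of_lt (le_max_right _ _) h5
    refine ⟨Set.range u, Set.infinite_range_of_injective humono.injective, ?_, ?_⟩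
    · intro j hj
      refine almostSub_trans (almostSub_of_subset ?_) (hS₀sub (f j) ⟨j, hj, rfl⟩)
      rintro x ⟨m, rfl⟩; exact huS m
    · intro m; rw [nth_range_eq humono]; exact huG m
  obtain ⟨B, hB⟩ := rec_choice r Q hmono hex
  set C : Set (Set ℕ) := Set.range B with hC
  have hcard : Cardinal.mk ↥C < Cardinal.continuum := lt_of_le_of_lt Cardinal.mk_range_le hι
  have hinf : ∀ A ∈ C, A.Infinite := by rintro A ⟨i, rfl⟩; exact (hB i).1
  have hch : IsChain almostSub C := by
    rintro A ⟨j, rfl⟩ B' ⟨j', rfl⟩ hne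
    rcases trichotomous_of r j j' with h | h | h
    · exact Or.inr ((hB j').2.1 j h)
    · exact absurd (by rw [h]) hne
    · exact Or.inl ((hB j).2.1 j' h)
  obtain ⟨Sf, hSfinf, hSfsub⟩ := tower_prop h𝔱 hcard hinf hch
  refine ⟨fun m => Nat.nth (· ∈ Sf) m, ?_⟩
  intro i
  have h1 : almostSub Sf (B i) := hSfsub _ ⟨i, rfl⟩
  obtain ⟨k, hk⟩ := nth_shift hSfinf (hB i).1 h1
  rw [Filter.eventually_atTop]
  refine ⟨2 * k + 4, fun m hm => ?_⟩
  have h2 : G i (2 ^ (m - k)) < Nat.nth (· ∈ B i) (m - k) := (hB i).2.2 (m - k)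
  have h3 : Nat.nth (· ∈ B i) (m - k) ≤ Nat.nth (· ∈ Sf) m := by
    have h6 := hk (m - k)
    rwa [Nat.sub_add_cancel (by omega : k ≤ m)] at h6
  have h4 : g i m ≤ G i m := hGge i m
  have h5 : G i m ≤ G i (2 ^ (m - k)) := by
    apply hGmono i
    have h7 := two_mul_le_two_pow (m - k) (by omega)
    omega
  show g i m < Nat.nth (· ∈ Sf) m
  omega


def pp1 (x : ℕ) : ℕ := x.unpair.1
def pp2 (x : ℕ) : ℕ := x.unpair.2

/-- codes of intervals `[n, n+k]` with `k ≤ n` lying inside `T` -/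
def ES (T : Set ℕ) : Set ℕ :=
  {x | pp2 x ≤ pp1 x ∧ Set.Icc (pp1 x) (pp1 x + pp2 x) ⊆ T}

def US (m : ℕ) : Set ℕ := {x | pp2 x ≤ pp1 x ∧ m ≤ pp2 x}

lemma pp1_pair (n k : ℕ) : pp1 (Nat.pair n k) = n := by simp [pp1]
lemma pp2_pair (n k : ℕ) : pp2 (Nat.pair n k) = k := by simp [pp2]

lemma unpair_injective : Function.Injective Nat.unpair := by
  intro a b hab
  rw [← Nat.pair_unpair a, ← Nat.pair_unpair b, hab]

lemma bounded_finite (N M : ℕ) : {x : ℕ | pp1 x ≤ N ∧ pp2 x ≤ M}.Finite := by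
  have heq : {x : ℕ | pp1 x ≤ N ∧ pp2 x ≤ M} =
      Nat.unpair ⁻¹' (Set.Iic N ×ˢ Set.Iic M) := by
    ext x
    simp [pp1, pp2, Set.mem_prod, Prod.le_def]
  rw [heq]
  exact Set.Finite.preimage unpair_injective.injOn
    ((Set.finite_Iic N).prod (Set.finite_Iic M))

lemma ES_US_unbounded {T : Set ℕ} (hT : Thick T) (m N : ℕ) :
    ∃ x, x ∈ ES T ∧ x ∈ US m ∧ N ≤ pp1 x := by
  obtain ⟨n, hn, hsub⟩ := thick_exists_interval hT m (max N m)
  refine ⟨Nat.pair n m, ⟨?_, ?_⟩, ⟨?_, ?_⟩, ?_⟩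
  · rw [pp1_pair, pp2_pair]; omega
  · rw [pp1_pair, pp2_pair]; exact hsub
  · rw [pp1_pair, pp2_pair]; omega
  · rw [pp2_pair]
  · rw [pp1_pair]; omega

lemma ES_US_infinite {T : Set ℕ} (hT : Thick T) (m : ℕ) :
    (ES T ∩ US m).Infinite := by
  apply Set.infinite_of_forall_exists_gt
  intro a
  obtain ⟨x, h1, h2, h3⟩ := ES_US_unbounded hT m (a + 1)
  refine ⟨x, ⟨h1, h2⟩, ?_⟩
  have : pp1 x ≤ x := Nat.unpair_left_le x
  omega

lemma US_infinite (m : ℕ) : (US m).Infinite :=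
  ((ES_US_infinite thick_univ m).mono Set.inter_subset_right)

lemma ES_mono {T T' : Set ℕ} (h : almostSub T T') : almostSub (ES T) (ES T') := by
  rcases Set.eq_empty_or_nonempty (T \ T') with he | hne
  · apply almostSub_of_subset
    have hTT : T ⊆ T' := by
      intro x hx
      by_contra hx'
      exact absurd (Set.eq_empty_iff_forall_notMem.1 he x) (by simp [hx, hx'])
    rintro x ⟨hx1, hx2⟩
    exact ⟨hx1, hx2.trans hTT⟩
  · obtain ⟨N, hN⟩ := h.bddAbove
    apply (bounded_finite N N).subset
    rintro x ⟨⟨hx1, hx2⟩, hx3⟩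
    have hnot : ¬ Set.Icc (pp1 x) (pp1 x + pp2 x) ⊆ T' := by
      intro hcon
      exact hx3 ⟨hx1, hcon⟩
    obtain ⟨y, hy, hy'⟩ := Set.not_subset.1 hnot
    have hyd : y ∈ T \ T' := ⟨hx2 hy, hy'⟩
    have hyN : y ≤ N := hN hyd
    obtain ⟨hy1, hy2⟩ := hy
    constructor <;> omega

lemma thick_lower (h𝔱 : towerNum = Cardinal.continuum) {C : Set (Set ℕ)}
    (hcard : Cardinal.mk ↥C < Cardinal.continuum)
    (hth : ∀ T ∈ C, Thick T) (hch : IsChain almostSub C) :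
    ∃ B, Thick B ∧ ∀ T ∈ C, almostSub B T := by
  classical
  -- pseudo-intersections X m of the chains {ES T ∩ US m}
  have hX : ∀ m : ℕ, ∃ X : Set ℕ, X.Infinite ∧ almostSub X (US m) ∧
      ∀ T ∈ C, almostSub X (ES T ∩ US m) := by
    intro m
    set D : Set (Set ℕ) := insert (US m) ((fun T => ES T ∩ US m) '' C) with hD
    have hDinf : ∀ A ∈ D, A.Infinite := by
      rintro A (rfl | ⟨T, hT, rfl⟩)
      · exact US_infinite m
      · exact ES_US_infinite (hth T hT) m
    have hDch : IsChain almostSub D := by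
      rintro A (rfl | ⟨T, hT, rfl⟩) B (rfl | ⟨T', hT', rfl⟩) hne
      · exact absurd rfl hne
      · exact Or.inr (almostSub_of_subset Set.inter_subset_right)
      · exact Or.inl (almostSub_of_subset Set.inter_subset_right)
      · rcases eq_or_ne T T' with rfl | hTT
        · exact absurd rfl hne
        · rcases hch hT hT' hTT with h | h
          · left
            refine (ES_mono h).subset ?_
            rintro x ⟨⟨hx1, hx2⟩, hx3⟩
            exact ⟨hx1, fun hc => hx3 ⟨hc, hx2⟩⟩
          · right
            refine (ES_mono h).subset ?_
            rintro x ⟨⟨hx1, hx2⟩, hx3⟩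
            exact ⟨hx1, fun hc => hx3 ⟨hc, hx2⟩⟩
    have hDcard : Cardinal.mk ↥D < Cardinal.continuum := by
      refine lt_of_le_of_lt Cardinal.mk_insert_le ?_
      apply Cardinal.add_lt_of_lt Cardinal.aleph0_le_continuum
      · exact lt_of_le_of_lt Cardinal.mk_image_le hcard
      · exact lt_of_lt_of_le Cardinal.one_lt_aleph0 Cardinal.aleph0_le_continuum
    obtain ⟨X, hXinf, hXsub⟩ := tower_prop h𝔱 hDcard hDinf hDch
    exact ⟨X, hXinf, hXsub _ (Set.mem_insert _ _),
      fun T hT => hXsub _ (Set.mem_insert_of_mem _ ⟨T, hT, rfl⟩)⟩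
  choose X hXinf hXU hXE using hX
  -- bounding functions
  set g : ↥C → ℕ → ℕ := fun T m => sSup (pp1 '' (X m \ ES T.1)) with hg
  have hgkey : ∀ (T : ↥C) m x, x ∈ X m → g T m < pp1 x → x ∈ ES T.1 := by
    intro T m x hx hlt
    by_contra hxe
    have hfin : (X m \ ES T.1).Finite := by
      have h1 := hXE m T.1 T.2
      have h2 := hXU m
      refine (h1.union h2).subset ?_
      rintro y ⟨hy1, hy2⟩
      by_cases hyU : y ∈ US m
      · exact Or.inl ⟨hy1, fun hc => hy2 hc.1⟩
      · exact Or.inr ⟨hy1, hyU⟩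
    have hle : pp1 x ≤ g T m :=
      le_csSup (hfin.image pp1).bddAbove ⟨x, ⟨hx, hxe⟩, rfl⟩
    omega
  obtain ⟨fd, hfd⟩ := exists_dominating h𝔱 hcard g
  -- select elements
  have hsel : ∀ m : ℕ, ∃ x, x ∈ X m ∧ x ∈ US m ∧ fd m < pp1 x := by
    intro m
    have hXUm : (X m ∩ US m).Infinite := by
      have h1 : (X m \ (X m \ US m)).Infinite := (hXinf m).diff (hXU m)
      refine h1.mono ?_
      rintro y ⟨hy1, hy2⟩
      exact ⟨hy1, by by_contra hc; exact hy2 ⟨hy1, hc⟩⟩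
    have hfin : ((X m ∩ US m) ∩ {x | pp1 x ≤ fd m}).Finite := by
      apply (bounded_finite (fd m) (fd m)).subset
      rintro y ⟨⟨_, hy2⟩, hy3⟩
      obtain ⟨hy4, _⟩ := hy2
      have hy3' : pp1 y ≤ fd m := hy3
      exact ⟨hy3', by omega⟩
    obtain ⟨x, hx⟩ := (hXUm.diff hfin).nonempty
    obtain ⟨⟨hx1, hx2⟩, hx3⟩ := hx
    refine ⟨x, hx1, hx2, ?_⟩
    by_contra hc
    push_neg at hc
    exact hx3 ⟨⟨hx1, hx2⟩, hc⟩
  choose xs hxsX hxsU hxsfd using hsel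
  refine ⟨⋃ m, Set.Icc (pp1 (xs m)) (pp1 (xs m) + pp2 (xs m)), ?_, ?_⟩
  · intro k
    refine ⟨pp1 (xs k), ?_⟩
    obtain ⟨_, h2⟩ := hxsU k
    refine Set.Subset.trans ?_ (Set.subset_iUnion _ k)
    intro y hy
    obtain ⟨hy1, hy2⟩ := hy
    exact ⟨hy1, by omega⟩
  · intro T hT
    obtain ⟨m₀, hm₀⟩ := Filter.eventually_atTop.1 (hfd ⟨T, hT⟩)
    have hsub : (⋃ m, Set.Icc (pp1 (xs m)) (pp1 (xs m) + pp2 (xs m))) \ T ⊆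
        ⋃ m ∈ Finset.range m₀, Set.Icc (pp1 (xs m)) (pp1 (xs m) + pp2 (xs m)) := by
      rintro y ⟨hy1, hy2⟩
      obtain ⟨m, hm⟩ := Set.mem_iUnion.1 hy1
      rcases lt_or_ge m m₀ with h | h
      · exact Set.mem_biUnion (Finset.mem_range.2 h) hm
      · exfalso
        have h5 : g ⟨T, hT⟩ m < fd m := hm₀ m h
        have h6 : xs m ∈ ES T := by
          refine hgkey ⟨T, hT⟩ m (xs m) (hxsX m) ?_
          have h7 := hxsfd m
          omega
        exact hy2 (h6.2 hm)
    exact ((Set.Finite.biUnion (Finset.range m₀).finite_toSet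
      (fun k _ => Set.finite_Icc _ _)).subset hsub)


lemma mk_set_nat : Cardinal.mk (Set ℕ) = Cardinal.continuum := by
  rw [Cardinal.mk_set, Cardinal.mk_nat, Cardinal.two_power_aleph0]

lemma aleph0_lt_cof_continuum : Cardinal.aleph0 < (Cardinal.continuum.ord).cof := by
  by_contra hle
  push_neg at hle
  have h1 := Cardinal.lt_power_cof Cardinal.aleph0_le_continuum
  have h2 : Cardinal.continuum ^ (Cardinal.continuum.ord).cof ≤
      Cardinal.continuum ^ Cardinal.aleph0 :=
    Cardinal.power_le_power_left Cardinal.continuum_ne_zero hle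
  rw [Cardinal.continuum_power_aleph0] at h2
  exact absurd (h1.trans_le h2) (lt_irrefl _)

lemma exists_good_filter (h𝔱 : towerNum = Cardinal.continuum) :
    ∃ F : Filter ℕ, F.NeBot ∧ F ≤ Filter.cofinite ∧
      (∀ A ∈ F, ∀ n, tr n A ∈ F) ∧
      (∀ 𝒜 : Set (Set ℕ), 𝒜.Countable → (∀ A ∈ 𝒜, A ∈ F) →
        ∃ B ∈ F, ∀ A ∈ 𝒜, almostSub B A) ∧
      (∀ A : Set ℕ, (∃ B ∈ F, B ∩ A = ∅) ∨
        (∃ B ∈ F, ∃ k, B ⊆ ⋃ n ∈ Set.Iic k, tr n A)) := by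
  classical
  obtain ⟨r, wo, hr⟩ := Cardinal.ord_eq (Set ℕ)
  haveI := wo
  set Q : Set ℕ → Set ℕ → (Set ℕ → Set ℕ) → Prop := fun i T f =>
    Thick T ∧ (∀ j, r j i → ∀ n, almostSub T (tr n (f j))) ∧
      (T ∩ i = ∅ ∨ ∃ k, T ⊆ ⋃ n ∈ Set.Iic k, tr n i) with hQ
  have hmono : ∀ i S f f', (∀ j, r j i → f j = f' j) → Q i S f → Q i S f' := by
    rintro i S f f' hff ⟨h1, h2, h3⟩
    exact ⟨h1, fun j hj n => (hff j hj) ▸ h2 j hj n, h3⟩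
  have hex : ∀ i f, (∀ j, r j i → Q j (f j) f) → ∃ S, Q i S f := by
    intro i f hf
    set C : Set (Set ℕ) := f '' {j | r j i} with hC
    have hcard : Cardinal.mk ↥C < Cardinal.continuum := by
      refine lt_of_le_of_lt Cardinal.mk_image_le ?_
      have h1 : Cardinal.mk ↥{j | r j i} = (Ordinal.typein r i).card :=
        Ordinal.card_typein i
      rw [h1, ← mk_set_nat]
      exact Cardinal.card_typein_lt i hr
    have hth' : ∀ T ∈ C, Thick T := by rintro T ⟨j, hj, rfl⟩; exact (hf j hj).1
    have hch : IsChain almostSub C := by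
      rintro A ⟨j, hj, rfl⟩ B ⟨j', hj', rfl⟩ hne
      rcases trichotomous_of r j j' with h | h | h
      · refine Or.inr ?_
        have h0 := (hf j' hj').2.1 j h 0
        rwa [tr_zero] at h0
      · exact absurd (by rw [h]) hne
      · refine Or.inl ?_
        have h0 := (hf j hj).2.1 j' h 0
        rwa [tr_zero] at h0
    obtain ⟨B, hBth, hBsub⟩ := thick_lower h𝔱 hcard hth' hch
    obtain ⟨B', hB'th, hB'sub, hB'tr⟩ := thick_theta hBth
    obtain ⟨T, hTth, hTsub, hTd⟩ := thick_dichotomy hB'th i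
    refine ⟨T, hTth, ?_, hTd⟩
    intro j hj n
    have h1 : almostSub T (tr n B) :=
      almostSub_trans (almostSub_of_subset hTsub) (hB'tr n)
    have h2 : almostSub (tr n B) (tr n (f j)) :=
      almostSub_tr_mono (hBsub (f j) ⟨j, hj, rfl⟩) n
    exact almostSub_trans h1 h2
  obtain ⟨f, hfQ⟩ := rec_choice r Q hmono hex
  have hthick : ∀ i, Thick (f i) := fun i => (hfQ i).1
  have hchain : ∀ i j, r i j → almostSub (f j) (f i) := by
    intro i j h
    have h0 := (hfQ j).2.1 i h 0
    rwa [tr_zero] at h0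
  have hlim : Order.IsSuccLimit (Ordinal.type r) := by
    rw [← hr, mk_set_nat]
    exact Cardinal.isSuccLimit_ord Cardinal.aleph0_le_continuum
  have hnomax : ∀ i : Set ℕ, ∃ j, r i j := by
    intro i
    have h1 : Order.succ (Ordinal.typein r i) < Ordinal.type r :=
      hlim.succ_lt (Ordinal.typein_lt_type r i)
    refine ⟨Ordinal.enum r ⟨Order.succ (Ordinal.typein r i), h1⟩, ?_⟩
    have h2 : Ordinal.typein r i <
        Ordinal.typein r (Ordinal.enum r ⟨Order.succ (Ordinal.typein r i), h1⟩) := by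
      rw [Ordinal.typein_enum]
      exact Order.lt_succ _
    rwa [Ordinal.typein_lt_typein r] at h2
  -- the filter generated by the chain
  set FS : Set (Set ℕ) := {A | ∃ i, almostSub (f i) A} with hFS
  have hFinter : ∀ A B : Set ℕ, A ∈ FS → B ∈ FS → A ∩ B ∈ FS := by
    rintro A B ⟨i, hi⟩ ⟨j, hj⟩
    have haux : ∀ (i' : Set ℕ), almostSub (f i') A → almostSub (f i') B →
        A ∩ B ∈ FS := by
      intro i' h1 h2
      refine ⟨i', ?_⟩
      refine (h1.union h2).subset ?_
      intro x hx
      by_cases h3 : x ∈ A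
      · exact Or.inr ⟨hx.1, fun hB => hx.2 ⟨h3, hB⟩⟩
      · exact Or.inl ⟨hx.1, h3⟩
    rcases trichotomous_of r i j with h | h | h
    · exact haux j (almostSub_trans (hchain i j h) hi) hj
    · subst h; exact haux i hi hj
    · exact haux i hi (almostSub_trans (hchain j i h) hj)
  set F : Filter ℕ :=
    { sets := FS
      univ_sets := ⟨∅, almostSub_of_subset (Set.subset_univ _)⟩
      sets_of_superset := by
        rintro A B ⟨i, hi⟩ hAB
        refine ⟨i, hi.subset ?_⟩
        intro x hx
        exact ⟨hx.1, fun hA => hx.2 (hAB hA)⟩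
      inter_sets := fun hA hB => hFinter _ _ hA hB } with hF
  have hmemF : ∀ A : Set ℕ, A ∈ F ↔ ∃ i, almostSub (f i) A := fun A => Iff.rfl
  have hfmem : ∀ i, f i ∈ F := fun i => ⟨i, almostSub_refl _⟩
  have hneF : F.NeBot := by
    rw [Filter.neBot_iff]
    intro hbot
    have h0 : (∅ : Set ℕ) ∈ F := by rw [hbot]; exact Filter.mem_bot
    obtain ⟨i, hi⟩ := h0
    have h1 : (f i).Finite := by simpa [almostSub] using hi
    exact absurd h1 (thick_infinite (hthick i))
  refine ⟨F, hneF, ?_, ?_, ?_, ?_⟩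
  · -- ≤ cofinite
    refine Filter.le_def.mpr ?_
    intro A hA
    rw [Filter.mem_cofinite] at hA
    exact ⟨∅, hA.subset (fun x hx => hx.2)⟩
  · -- translation invariance
    rintro A ⟨i, hi⟩ n
    obtain ⟨j, hj⟩ := hnomax i
    refine ⟨j, ?_⟩
    have h1 : almostSub (f j) (tr n (f i)) := (hfQ j).2.1 i hj n
    have h2 : almostSub (tr n (f i)) (tr n A) := almostSub_tr_mono hi n
    exact almostSub_trans h1 h2
  · -- P-filter
    intro 𝒜 hct hsub
    haveI : Countable ↥𝒜 := hct.to_subtype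
    have hIA : ∀ A : ↥𝒜, ∃ i, almostSub (f i) A.1 := fun A => hsub A.1 A.2
    choose I hI using hIA
    rcases isEmpty_or_nonempty ↥𝒜 with hemp | hne
    · refine ⟨f ∅, hfmem ∅, ?_⟩
      intro A hA
      exact absurd hA (by simpa using hemp.false ⟨A, hA⟩)
    · have hbound : ∃ j : Set ℕ, ∀ A : ↥𝒜, r (I A) j := by
        set o : Ordinal := ⨆ A : ↥𝒜, Ordinal.typein r (I A) with ho
        have h1 : o < Ordinal.type r := by
          refine Ordinal.iSup_lt_ord ?_ (fun A => Ordinal.typein_lt_type r (I A))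
          rw [← hr, mk_set_nat]
          exact lt_of_le_of_lt (Cardinal.mk_le_aleph0) aleph0_lt_cof_continuum
        have h2 : Order.succ o < Ordinal.type r := hlim.succ_lt h1
        refine ⟨Ordinal.enum r ⟨Order.succ o, h2⟩, ?_⟩
        intro A
        have h3 : Ordinal.typein r (I A) ≤ o :=
          le_ciSup (Ordinal.bddAbove_range _) A
        have h4 : Ordinal.typein r (I A) <
            Ordinal.typein r (Ordinal.enum r ⟨Order.succ o, h2⟩) := by
          rw [Ordinal.typein_enum]
          exact h3.trans_lt (Order.lt_succ _)
        rwa [Ordinal.typein_lt_typein r] at h4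
      obtain ⟨j, hj⟩ := hbound
      refine ⟨f j, hfmem j, ?_⟩
      intro A hA
      exact almostSub_trans (hchain (I ⟨A, hA⟩) j (hj ⟨A, hA⟩)) (hI ⟨A, hA⟩)
  · -- dichotomy
    intro A
    rcases (hfQ A).2.2 with h | ⟨k, h⟩
    · exact Or.inl ⟨f A, hfmem A, h⟩
    · exact Or.inr ⟨f A, hfmem A, k, h⟩



def star' (A : Set ℕ) : Set ↥NStar := Subtype.val ⁻¹' {p : βN | A ∈ p}

lemma isOpen_star' (A : Set ℕ) : IsOpen (star' A) :=
  (ultrafilter_isOpen_basic A).preimage continuous_subtype_val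

lemma NStar_closed : IsClosed NStar := by
  have heq : NStar = ⋂ (A : Set ℕ) (_ : Aᶜ.Finite), {p : βN | A ∈ p} := by
    ext p
    simp only [NStar, Set.mem_setOf_eq, Set.mem_iInter]
    constructor
    · intro h A hA
      exact h (Filter.mem_cofinite.2 hA)
    · intro h
      refine Filter.le_def.mpr ?_
      intro A hA
      exact h A (Filter.mem_cofinite.1 hA)
  rw [heq]
  exact isClosed_iInter fun A => isClosed_iInter fun _ => ultrafilter_isClosed_basic A

lemma exists_basic_between {K U : Set ↥NStar} (hK : IsCompact K) (hU : IsOpen U)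
    (hKU : K ⊆ U) : ∃ A : Set ℕ, K ⊆ star' A ∧ star' A ⊆ U := by
  classical
  have hbasis : TopologicalSpace.IsTopologicalBasis
      ((Set.preimage (Subtype.val : ↥NStar → βN)) '' ultrafilterBasis ℕ) :=
    TopologicalSpace.IsTopologicalBasis.isInducing Topology.IsInducing.subtypeVal
      ultrafilterBasis_is_basis
  have hcover : ∀ x : ↥NStar, x ∈ K → ∃ A : Set ℕ, x ∈ star' A ∧ star' A ⊆ U := by
    intro x hx
    obtain ⟨b, hb, hxb, hbU⟩ := hbasis.exists_subset_of_mem_open (hKU hx) hU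
    obtain ⟨c, hc, rfl⟩ := hb
    obtain ⟨A, rfl⟩ := hc
    exact ⟨A, hxb, hbU⟩
  choose! A hA1 hA2 using hcover
  have hcov : K ⊆ ⋃ x ∈ K, star' (A x) := fun x hx => Set.mem_biUnion hx (hA1 x hx)
  obtain ⟨t, htK, htf, ht⟩ := hK.elim_finite_subcover_image
    (fun x _ => isOpen_star' (A x)) hcov
  refine ⟨⋃ x ∈ t, A x, ?_, ?_⟩
  · intro y hy
    obtain ⟨x, hxt, hyx⟩ := Set.mem_iUnion₂.1 (ht hy)
    have : A x ∈ (y.1 : Ultrafilter ℕ) := hyx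
    show (⋃ x ∈ t, A x) ∈ (y.1 : Ultrafilter ℕ)
    exact Filter.mem_of_superset this (Set.subset_biUnion_of_mem hxt)
  · intro p hp
    have hmem : (⋃ x ∈ t, A x) ∈ (p.1 : Ultrafilter ℕ) := hp
    obtain ⟨x, hxt, hxA⟩ := (Ultrafilter.finite_biUnion_mem_iff htf).1 hmem
    exact hA2 x (htK hxt) hxA

end Stmt5


open Stmt5

/-- If `𝔱 = 𝔠` then there is a minimal right ideal of `(βℕ, +)`
that is also a `P`-set in `ℕ*`. -/
theorem stmt5 (h : towerNum = Cardinal.continuum) :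
    ∃ I : Set βN, IsMinRightIdeal I ∧ IsPSetIn I := by
  classical
  obtain ⟨F, hne, hcof, htr, hP, hdich⟩ := exists_good_filter h
  haveI := hne
  set I : Set βN := {p | (p : Filter ℕ) ≤ F} with hI
  have hmemI : ∀ p : βN, p ∈ I ↔ ∀ A ∈ F, A ∈ p := by
    intro p
    exact ⟨fun h' A hA => h' hA, fun h' A hA => h' A hA⟩
  have haddU : ∀ (p q : βN) (A : Set ℕ), A ∈ addU p q ↔ {n | tr n A ∈ p} ∈ q := by
    intro p q A
    have h1 : A ∈ addU p q ↔ {n | A ∈ Ultrafilter.map (· + n) p} ∈ q := by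
      show A ∈ (Ultrafilter.bind q fun n => p.map (· + n)) ↔ _
      rw [← Ultrafilter.mem_coe]
      show A ∈ (Filter.bind ↑q fun n => ↑(p.map (· + n))) ↔ _
      rw [Filter.mem_bind']
      exact Iff.rfl
    rw [h1]
    have h2 : {n | A ∈ Ultrafilter.map (· + n) p} = {n | tr n A ∈ p} := by
      ext n
      exact Ultrafilter.mem_map
    rw [h2]
  have hIright : IsRightIdeal I := by
    intro p hp q
    rw [Set.mem_setOf_eq] at hp ⊢
    refine Filter.le_def.mpr ?_
    intro A hA
    show A ∈ addU p q
    rw [haddU]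
    have huniv : {n | tr n A ∈ p} = Set.univ := by
      ext n
      simp only [Set.mem_setOf_eq, Set.mem_univ, iff_true]
      exact hp (htr A hA n)
    rw [huniv]
    exact Filter.univ_mem
  have hInonempty : I.Nonempty := by
    obtain ⟨u, hu⟩ := Ultrafilter.exists_le F
    exact ⟨u, hu⟩
  have hIN : I ⊆ NStar := fun p hp => le_trans hp hcof
  have hmin : ∀ J : Set βN, J.Nonempty → IsRightIdeal J → J ⊆ I → J = I := by
    rintro J ⟨p, hpJ⟩ hJr hJI
    apply Set.Subset.antisymm hJI
    intro q hq
    have hpI : p ∈ I := hJI hpJ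
    set 𝒮 : Set (Set ℕ) := (fun A => {n | tr n A ∈ p}) '' {A | A ∈ q} with h𝒮
    have hSne : ∀ A ∈ q, {n | tr n A ∈ p}.Nonempty := by
      intro A hA
      rcases hdich A with ⟨B, hBF, hdisj⟩ | ⟨B, hBF, k, hsub⟩
      · exfalso
        have hBq : B ∈ q := (hmemI q).1 hq B hBF
        have hint : B ∩ A ∈ q := Filter.inter_mem hBq hA
        rw [hdisj] at hint
        exact (Filter.empty_notMem (q : Filter ℕ)) hint
      · have hBp : B ∈ p := (hmemI p).1 hpI B hBF
        have hUm : (⋃ n ∈ Set.Iic k, tr n A) ∈ p := Filter.mem_of_superset hBp hsub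
        obtain ⟨n, _, hnp⟩ := (Ultrafilter.finite_biUnion_mem_iff (Set.finite_Iic k)).1 hUm
        exact ⟨n, hnp⟩
    have hgen : ∀ t ⊆ 𝒮, t.Finite → (⋂₀ t).Nonempty := by
      intro t hts htf
      have hW : ∀ x : Set ℕ, x ∈ t → ∃ A, A ∈ q ∧ {n | tr n A ∈ p} = x := by
        intro x hx
        obtain ⟨A, hA, hAx⟩ := hts hx
        exact ⟨A, hA, hAx⟩
      choose! Aw hAw1 hAw2 using hW
      have hAint : (⋂ x ∈ t, Aw x) ∈ q := (Filter.biInter_mem htf).2 fun x hx => hAw1 x hx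
      obtain ⟨n, hn⟩ := hSne _ hAint
      refine ⟨n, ?_⟩
      rw [Set.mem_sInter]
      intro x hx
      rw [← hAw2 x hx]
      show tr n (Aw x) ∈ p
      refine Filter.mem_of_superset hn ?_
      intro m hm
      have hm' : m + n ∈ ⋂ x ∈ t, Aw x := hm
      exact Set.mem_iInter₂.1 hm' x hx
    haveI hGne : (Filter.generate 𝒮).NeBot := Filter.generate_neBot_iff.2 hgen
    obtain ⟨rr, hrr⟩ := Ultrafilter.exists_le (Filter.generate 𝒮)
    have hrS : ∀ A ∈ q, {n | tr n A ∈ p} ∈ rr := by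
      intro A hA
      exact hrr (Filter.mem_generate_of_mem ⟨A, hA, rfl⟩)
    have heq : addU p rr = q := by
      apply Ultrafilter.eq_of_le
      refine Filter.le_def.mpr ?_
      intro A hA
      show A ∈ addU p rr
      rw [haddU]
      exact hrS A hA
    rw [← heq]
    exact hJr p hpJ rr
  have hclosedI : IsClosed I := by
    have heq : I = ⋂ (A : Set ℕ) (_ : A ∈ F), {p : βN | A ∈ p} := by
      ext p
      simp only [Set.mem_iInter, Set.mem_setOf_eq]
      exact ⟨fun h' A hA => h' hA, fun h' A hA => h' A hA⟩
    rw [heq]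
    exact isClosed_iInter fun A => isClosed_iInter fun _ => ultrafilter_isClosed_basic A
  refine ⟨I, ⟨hInonempty, hIright, hmin⟩, hIN, ?_, ?_⟩
  · exact hclosedI.preimage continuous_subtype_val
  · intro 𝒜 hct h𝒜
    have hKc : IsCompact (Subtype.val ⁻¹' I : Set ↥NStar) := by
      rw [Subtype.isCompact_iff]
      have himg : (Subtype.val '' (Subtype.val ⁻¹' I) : Set βN) = NStar ∩ I :=
        Subtype.image_preimage_coe _ _
      rw [himg]
      exact (NStar_closed.inter hclosedI).isCompact
    have hAU : ∀ U : ↥𝒜, ∃ A : Set ℕ, A ∈ F ∧ (Subtype.val ⁻¹' I) ⊆ star' A ∧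
        star' A ⊆ U.1 := by
      intro U
      obtain ⟨hUo, hUsub⟩ := h𝒜 U.1 U.2
      obtain ⟨A, hA1, hA2⟩ := exists_basic_between hKc hUo hUsub
      refine ⟨A, ?_, hA1, hA2⟩
      by_contra hAF
      have hne2 : (F ⊓ Filter.principal Aᶜ).NeBot := by
        rw [Filter.inf_principal_neBot_iff]
        intro B hB
        rcases Set.eq_empty_or_nonempty (B ∩ Aᶜ) with he | hne3
        · exfalso
          apply hAF
          have hBA : B ⊆ A := by
            intro x hx
            by_contra hc
            exact absurd (Set.eq_empty_iff_forall_notMem.1 he x) (by simp [hx, hc])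
          exact Filter.mem_of_superset hB hBA
        · exact hne3
      haveI := hne2
      obtain ⟨u, hu⟩ := Ultrafilter.exists_le (F ⊓ Filter.principal Aᶜ)
      have huI : u ∈ I := le_trans hu inf_le_left
      have huN : u ∈ NStar := hIN huI
      have h5 : (⟨u, huN⟩ : ↥NStar) ∈ star' A := hA1 huI
      have h6 : Aᶜ ∈ u := hu (Filter.mem_inf_of_right (Filter.mem_principal_self _))
      have h7 : A ∈ u := h5
      exact absurd h7 (Ultrafilter.compl_mem_iff_notMem.1 h6)
    choose Af hAf1 hAf2 hAf3 using hAU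
    haveI : Countable ↥𝒜 := hct.to_subtype
    have hct2 : (Set.range Af).Countable := Set.countable_range Af
    obtain ⟨B, hBF, hBsub⟩ := hP (Set.range Af) hct2 (by rintro A ⟨U, rfl⟩; exact hAf1 U)
    have hXB : (Subtype.val ⁻¹' I) ⊆ star' B := by
      intro x hx
      exact (hmemI x.1).1 hx B hBF
    have hBsub2 : star' B ⊆ ⋂₀ 𝒜 := by
      intro x hx
      rw [Set.mem_sInter]
      intro U hU
      apply hAf3 ⟨U, hU⟩
      have hBA : almostSub B (Af ⟨U, hU⟩) := hBsub _ ⟨⟨U, hU⟩, rfl⟩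
      have hfree : (x.1 : Filter ℕ) ≤ Filter.cofinite := x.2
      show Af ⟨U, hU⟩ ∈ (x.1 : Ultrafilter ℕ)
      have h8 : (B \ Af ⟨U, hU⟩)ᶜ ∈ (x.1 : Ultrafilter ℕ) :=
        hfree (Filter.mem_cofinite.2 (by rw [compl_compl]; exact hBA))
      have h9 : B ∈ (x.1 : Ultrafilter ℕ) := hx
      have h10 : B ∩ (B \ Af ⟨U, hU⟩)ᶜ ∈ (x.1 : Ultrafilter ℕ) := Filter.inter_mem h9 h8
      refine Filter.mem_of_superset h10 ?_
      rintro y ⟨hy1, hy2⟩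
      by_contra hc
      exact hy2 ⟨hy1, hc⟩
    exact fun x hx => interior_maximal hBsub2 (isOpen_star' B) (hXB hx)


end
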